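/- Define the Stern-Brocot sequence (a_k)_{k ≥ 0} by a₀ = a₁ = 1, a_{2n} = a_n + a_{n-1} for n ≥ 1, and a_{2n+1} = a_n for n ≥ 1. Then for every k ≥ 0, a_k equals the number of integers j with 0 ≤ 2j ≤ k such that the binomial coefficient C(k - j, j) is odd. -/

import Mathlib

open Finset

/-- The Stern-Brocot sequence: `a₀ = a₁ = 1`, `a_{2n} = a_n + a_{n-1}` and `a_{2n+1} = a_n`
for `n ≥ 1`. -/
def stern : ℕ → ℕ
  | 0 => 1
  | 1 => 1
  | n + 2 =>
    if (n + 2) % 2 = 0 then stern ((n + 2) / 2) + stern ((n + 2) / 2 - 1)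
    else stern ((n + 2) / 2)
decreasing_by all_goals omega

lemma lucas2 (n k : ℕ) :
    Nat.choose n k % 2 = (Nat.choose (n % 2) (k % 2) * Nat.choose (n / 2) (k / 2)) % 2 :=
  @Choose.choose_modEq_choose_mod_mul_choose_div_nat n k 2 ⟨Nat.prime_two⟩

lemma L1 (a b : ℕ) : Nat.choose (2*a) (2*b) % 2 = Nat.choose a b % 2 := by
  rw [lucas2]; simp [Nat.mul_mod_right, Nat.mul_div_cancel_left]

lemma L3 (a b : ℕ) : Nat.choose (2*a+1) (2*b+1) % 2 = Nat.choose a b % 2 := by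
  rw [lucas2]; simp [Nat.mul_add_mod, Nat.mul_add_div]

lemma L2 (a b : ℕ) : Nat.choose (2*a+1) (2*b) % 2 = Nat.choose a b % 2 := by
  rw [lucas2]
  simp [Nat.mul_mod_right, Nat.mul_div_cancel_left, Nat.add_mul_mod_self_left,
    Nat.mul_add_div, Nat.mul_add_mod]

lemma L4 (a b : ℕ) : Nat.choose (2*a) (2*b+1) % 2 = 0 := by
  rw [lucas2]; simp [Nat.mul_mod_right, Nat.mul_add_mod]

/-- The counting function: number of `j` with `2j ≤ k` and `C(k-j, j)` odd. -/
def F (k : ℕ) : ℕ :=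
  ((Finset.range (k + 1)).filter
    (fun j => 2 * j ≤ k ∧ Nat.choose (k - j) j % 2 = 1)).card

lemma F_split (k : ℕ) :
    F k = ((Finset.range (k + 1)).filter
            (fun j => (2 * j ≤ k ∧ Nat.choose (k - j) j % 2 = 1) ∧ j % 2 = 0)).card
        + ((Finset.range (k + 1)).filter
            (fun j => (2 * j ≤ k ∧ Nat.choose (k - j) j % 2 = 1) ∧ ¬ j % 2 = 0)).card := by
  rw [F, ← Finset.card_filter_add_card_filter_not (s := (Finset.range (k + 1)).filter
      (fun j => 2 * j ≤ k ∧ Nat.choose (k - j) j % 2 = 1)) (fun j => j % 2 = 0),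
    Finset.filter_filter, Finset.filter_filter]

lemma F_even (n : ℕ) (hn : 1 ≤ n) : F (2 * n) = F n + F (n - 1) := by
  rw [F_split]
  congr 1
  · -- even j ↦ j/2
    refine Finset.card_nbij' (fun a => a / 2) (fun i => 2 * i) ?_ ?_ ?_ ?_
    · intro a ha
      simp only [mem_coe, mem_filter, mem_range] at ha ⊢
      obtain ⟨h1, ⟨h2, h3⟩, h4⟩ := ha
      refine ⟨by omega, by omega, ?_⟩
      rw [← L1, show 2 * (n - a/2) = 2*n - a by omega, show 2 * (a/2) = a by omega]
      exact h3
    · intro i hi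
      simp only [mem_coe, mem_filter, mem_range] at hi ⊢
      obtain ⟨h1, h2, h3⟩ := hi
      refine ⟨by omega, ⟨by omega, ?_⟩, by omega⟩
      rw [show 2*n - 2*i = 2 * (n - i) by omega, L1]
      exact h3
    · intro a ha
      simp only [mem_coe, mem_filter, mem_range] at ha
      dsimp only
      omega
    · intro i _; dsimp only; omega
  · -- odd j ↦ (j-1)/2
    refine Finset.card_nbij' (fun a => a / 2) (fun i => 2 * i + 1) ?_ ?_ ?_ ?_
    · intro a ha
      simp only [mem_coe, mem_filter, mem_range] at ha ⊢
      obtain ⟨h1, ⟨h2, h3⟩, h4⟩ := ha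
      refine ⟨by omega, by omega, ?_⟩
      rw [← L3, show 2 * (n - 1 - a/2) + 1 = 2*n - a by omega,
        show 2 * (a/2) + 1 = a by omega]
      exact h3
    · intro i hi
      simp only [mem_coe, mem_filter, mem_range] at hi ⊢
      obtain ⟨h1, h2, h3⟩ := hi
      refine ⟨by omega, ⟨by omega, ?_⟩, by omega⟩
      rw [show 2*n - (2*i+1) = 2 * (n - 1 - i) + 1 by omega, L3]
      exact h3
    · intro a ha
      simp only [mem_coe, mem_filter, mem_range] at ha
      dsimp only
      omega
    · intro i _; dsimp only; omega

lemma F_odd (n : ℕ) : F (2 * n + 1) = F n := by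
  rw [F_split]
  have hzero : ((Finset.range (2*n+1 + 1)).filter
      (fun j => (2 * j ≤ 2*n+1 ∧ Nat.choose (2*n+1 - j) j % 2 = 1) ∧ ¬ j % 2 = 0)).card = 0 := by
    rw [Finset.card_eq_zero, Finset.filter_eq_empty_iff]
    rintro a _ ⟨⟨h2, h3⟩, h4⟩
    rw [show 2*n+1 - a = 2 * (n - a/2) by omega, show a = 2 * (a/2) + 1 by omega, L4] at h3
    omega
  rw [hzero, Nat.add_zero]
  refine Finset.card_nbij' (fun a => a / 2) (fun i => 2 * i) ?_ ?_ ?_ ?_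
  · intro a ha
    simp only [mem_coe, mem_filter, mem_range] at ha ⊢
    obtain ⟨h1, ⟨h2, h3⟩, h4⟩ := ha
    refine ⟨by omega, by omega, ?_⟩
    rw [← L2, show 2 * (n - a/2) + 1 = 2*n+1 - a by omega, show 2 * (a/2) = a by omega]
    exact h3
  · intro i hi
    simp only [mem_coe, mem_filter, mem_range] at hi ⊢
    obtain ⟨h1, h2, h3⟩ := hi
    refine ⟨by omega, ⟨by omega, ?_⟩, by omega⟩
    rw [show 2*n+1 - 2*i = 2 * (n - i) + 1 by omega, L2]
    exact h3
  · intro a ha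
    simp only [mem_coe, mem_filter, mem_range] at ha
    dsimp only
    omega
  · intro i _; dsimp only; omega

lemma stern_eq_F (k : ℕ) : stern k = F k := by
  induction k using Nat.strong_induction_on with
  | _ k ih =>
    match k with
    | 0 => rw [stern]; decide
    | 1 => rw [stern]; decide
    | n + 2 =>
      rcases Nat.even_or_odd n with ⟨q, hq⟩ | ⟨q, hq⟩
      · have hk : n + 2 = 2 * (q + 1) := by omega
        rw [stern, if_pos (by omega), show (n+2)/2 = q + 1 by omega,
          ih (q+1) (by omega), ih (q+1-1) (by omega), hk, F_even (q+1) (by omega)]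
      · have hk : n + 2 = 2 * (q + 1) + 1 := by omega
        rw [stern, if_neg (by omega), show (n+2)/2 = q + 1 by omega,
          ih (q+1) (by omega), hk, F_odd (q+1)]

/-- For every `k ≥ 0`, the Stern-Brocot number `a_k` equals the number of integers `j` with
`0 ≤ 2j ≤ k` such that `C(k - j, j)` is odd. -/
theorem stmt13 (k : ℕ) :
    stern k =
      ((Finset.range (k + 1)).filter
        (fun j => 2 * j ≤ k ∧ Nat.choose (k - j) j % 2 = 1)).card := by
  exact stern_eq_F k
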